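/- The second-order cone relaxation is tight for a single leaf branch with an active upper voltage limit and adjustable reactive support: let r > 0 and χ > 0, set z = r² + χ², let v > 0 be the squared upstream voltage, P ∈ ℝ the fixed downstream active injection, Q̲ < Q̄ the reactive support bounds, and v̄ ∈ ℝ the upper voltage limit. Define f(l, Q) = l·v − (r·l − P)² − (χ·l − Q)² and the feasible set S = {(l, Q) ∈ ℝ² : l ≥ 0, Q̲ ≤ Q ≤ Q̄, f(l, Q) ≥ 0, and v − z·l + 2·r·P + 2·χ·Q ≤ v̄}. If (l*, Q*) minimizes the loss (l, Q) ↦ r·l over S and Q* > Q̲, then f(l*, Q*) = 0, i.e. l*·v = (r·l* − P)² + (χ·l* − Q*)². -/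
import Mathlib
set_option maxHeartbeats 1000000


/-- the SOC relaxation is tight for a single leaf branch with an
active upper voltage limit and adjustable reactive support. If `(l*, Q*)`
minimizes the loss `r·l` over the feasible set `S` (including the upper
voltage limit `v̄` on the downstream squared voltage) and the reactive support
is not at its lower bound (`Q* > Q̲`, Assumption 1), then `f(l*, Q*) = 0`. -/
theorem leaf_branch_socp_tight_voltage
    (r χ v P Qlb Qub vbar : ℝ)
    (hr : 0 < r) (hχ : 0 < χ) (hv : 0 < v) (hQ : Qlb < Qub)
    (z : ℝ) (hz : z = r ^ 2 + χ ^ 2)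
    (f : ℝ → ℝ → ℝ)
    (hf : f = fun l Q => l * v - (r * l - P) ^ 2 - (χ * l - Q) ^ 2)
    (S : Set (ℝ × ℝ))
    (hS : S = {lq : ℝ × ℝ | 0 ≤ lq.1 ∧ Qlb ≤ lq.2 ∧ lq.2 ≤ Qub ∧
      0 ≤ f lq.1 lq.2 ∧ v - z * lq.1 + 2 * r * P + 2 * χ * lq.2 ≤ vbar})
    (lstar Qstar : ℝ) (hmem : (lstar, Qstar) ∈ S)
    (hmin : ∀ lq ∈ S, r * lstar ≤ r * lq.1)
    (hQstar : Qlb < Qstar) :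
    f lstar Qstar = 0 := by
  rw [hS] at hmem
  obtain ⟨hl0, hQlb, hQub, hfpos, hvolt⟩ := hmem
  simp only at hl0 hQlb hQub hfpos hvolt
  -- case lstar = 0
  rcases eq_or_lt_of_le hl0 with hl | hl
  · rw [← hl] at hfpos ⊢
    rw [hf] at hfpos ⊢
    simp only at hfpos ⊢
    nlinarith [sq_nonneg P, sq_nonneg Qstar]
  -- case lstar > 0
  by_contra hne
  have hfstrict : 0 < f lstar Qstar := lt_of_le_of_ne hfpos (Ne.symm hne)
  set c : ℝ := z / (2 * χ) with hc
  have hcpos : 0 < c := by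
    apply div_pos _ (by linarith)
    rw [hz]; positivity
  set g : ℝ → ℝ := fun ε => f (lstar - ε) (Qstar - c * ε) with hg
  have hgcont : Continuous g := by
    rw [hg, hf]; continuity
  have hg0 : 0 < g 0 := by simpa [hg] using hfstrict
  have hev1 : ∀ᶠ ε in nhds (0:ℝ), 0 < g ε :=
    (hgcont.tendsto 0).eventually_const_lt hg0
  have hbnd : (0:ℝ) < min lstar ((Qstar - Qlb) / c) := by
    apply lt_min hl
    exact div_pos (by linarith) hcpos
  have hev2 : ∀ᶠ ε in nhds (0:ℝ), ε < min lstar ((Qstar - Qlb) / c) :=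
    Filter.tendsto_id.eventually_lt_const hbnd
  have hNe : (nhdsWithin (0:ℝ) (Set.Ioi 0)).NeBot := inferInstance
  have hself : ∀ᶠ ε in nhdsWithin (0:ℝ) (Set.Ioi 0), ε ∈ Set.Ioi (0:ℝ) :=
    self_mem_nhdsWithin
  obtain ⟨ε, ⟨⟨hgε, hεbnd⟩, hεpos⟩⟩ :=
    (((hev1.and hev2).filter_mono nhdsWithin_le_nhds).and hself).exists
  have hεpos' : (0:ℝ) < ε := hεpos
  have hεl : ε < lstar := lt_of_lt_of_le hεbnd (min_le_left _ _)
  have hεQ : c * ε < Qstar - Qlb := by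
    have := lt_of_lt_of_le hεbnd (min_le_right _ _)
    calc c * ε < c * ((Qstar - Qlb) / c) := by
          exact mul_lt_mul_of_pos_left this hcpos
      _ = Qstar - Qlb := by field_simp
  have hcε : 0 < c * ε := mul_pos hcpos hεpos'
  have hmem' : (lstar - ε, Qstar - c * ε) ∈ S := by
    rw [hS]
    refine ⟨?_, ?_, ?_, ?_, ?_⟩
    · show (0:ℝ) ≤ lstar - ε
      linarith
    · show Qlb ≤ Qstar - c * ε
      linarith
    · show Qstar - c * ε ≤ Qub
      linarith
    · exact hgε.le
    · show v - z * (lstar - ε) + 2 * r * P + 2 * χ * (Qstar - c * ε) ≤ vbar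
      have h2c : 2 * χ * c = z := by
        rw [hc]; field_simp
      have : v - z * (lstar - ε) + 2 * r * P + 2 * χ * (Qstar - c * ε)
          = v - z * lstar + 2 * r * P + 2 * χ * Qstar := by
        linear_combination (-ε) * h2c
      rw [this]; exact hvolt
  have := hmin _ hmem'
  simp only at this
  nlinarith
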